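/- arXiv:2403.15120 — 2 statements merged into one kernel-verified Lean document; each statement's English description precedes it below -/
import Mathlib

section
/- The function f(S, I) = log₂(1 + 1/(S·I)) is jointly convex on the domain S > 0, I > 0. -/
open Real Set

lemma hderiv (t : ℝ) : HasDerivAt (fun t : ℝ => Real.log (1 + Real.exp t))
    (Real.exp t / (1 + Real.exp t)) t := by
  have h : HasDerivAt (fun t : ℝ => 1 + Real.exp t) (Real.exp t) t :=
    (Real.hasDerivAt_exp t).const_add 1
  exact h.log (by positivity)

lemma myderiv_eq : deriv (fun t : ℝ => Real.log (1 + Real.exp t))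
    = fun t => Real.exp t / (1 + Real.exp t) := by
  ext t; exact (hderiv t).deriv

lemma hderiv2 (t : ℝ) : HasDerivAt (fun t => Real.exp t / (1 + Real.exp t))
    (Real.exp t / (1 + Real.exp t)^2) t := by
  have h : HasDerivAt (fun t : ℝ => 1 + Real.exp t) (Real.exp t) t :=
    (Real.hasDerivAt_exp t).const_add 1
  have := (Real.hasDerivAt_exp t).div h (by positivity)
  refine this.congr_deriv ?_
  ring

lemma convexOn_log_one_add_exp : ConvexOn ℝ univ (fun t : ℝ => Real.log (1 + Real.exp t)) := by
  refine convexOn_of_deriv2_nonneg' convex_univ ?_ ?_ ?_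
  · exact fun t _ => (hderiv t).differentiableAt.differentiableWithinAt
  · rw [myderiv_eq]
    exact fun t _ => (hderiv2 t).differentiableAt.differentiableWithinAt
  · intro t _
    simp only [Function.iterate_succ, Function.iterate_zero, Function.comp_apply, id]
    rw [myderiv_eq, (hderiv2 t).deriv]
    positivity

lemma gmono : Monotone (fun t : ℝ => Real.log (1 + Real.exp t)) := fun a b hab =>
  Real.log_le_log (by positivity) (by gcongr)

lemma hrewrite {x y : ℝ} (hx : 0 < x) (hy : 0 < y) :
    Real.log (1 + 1 / (x * y)) = Real.log (1 + Real.exp (-Real.log x - Real.log y)) := by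
  rw [show -Real.log x - Real.log y = -(Real.log x + Real.log y) by ring, Real.exp_neg,
    Real.exp_add, Real.exp_log hx, Real.exp_log hy, one_div]

/-- The function `f(S, I) = log₂(1 + 1/(S·I))` is jointly convex on the domain
`S > 0, I > 0`. -/
theorem convexOn_log2_one_add_inv_mul :
    ConvexOn ℝ {p : ℝ × ℝ | 0 < p.1 ∧ 0 < p.2}
      (fun p : ℝ × ℝ => Real.log (1 + 1 / (p.1 * p.2)) / Real.log 2) := by
  set S : Set (ℝ × ℝ) := {p : ℝ × ℝ | 0 < p.1 ∧ 0 < p.2}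
  have hS : Convex ℝ S := (convex_Ioi (0:ℝ)).prod (convex_Ioi 0)
  have hneg : ConvexOn ℝ (Ioi (0:ℝ)) (fun x => -Real.log x) := by
    exact (strictConcaveOn_log_Ioi.concaveOn).neg
  have h1 : ConvexOn ℝ S (fun p : ℝ × ℝ => -Real.log p.1) :=
    ((hneg.comp_linearMap (LinearMap.fst ℝ ℝ ℝ)).subset (fun p hp => hp.1) hS)
  have h2 : ConvexOn ℝ S (fun p : ℝ × ℝ => -Real.log p.2) :=
    ((hneg.comp_linearMap (LinearMap.snd ℝ ℝ ℝ)).subset (fun p hp => hp.2) hS)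
  have hh : ConvexOn ℝ S (fun p : ℝ × ℝ => -Real.log p.1 - Real.log p.2) := by
    simp only [sub_eq_add_neg]; exact h1.add h2
  have hmain : ConvexOn ℝ S (fun p : ℝ × ℝ => Real.log (1 + 1 / (p.1 * p.2))) := by
    refine ⟨hS, fun p hp q hq a b ha hb hab => ?_⟩
    have hx : a • p + b • q ∈ S := hS hp hq ha hb hab
    simp only
    rw [hrewrite hx.1 hx.2, hrewrite hp.1 hp.2, hrewrite hq.1 hq.2]
    calc Real.log (1 + Real.exp (-Real.log (a • p + b • q).1 - Real.log (a • p + b • q).2))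
        ≤ Real.log (1 + Real.exp (a • (-Real.log p.1 - Real.log p.2)
            + b • (-Real.log q.1 - Real.log q.2))) :=
          gmono (hh.2 hp hq ha hb hab)
      _ ≤ a • Real.log (1 + Real.exp (-Real.log p.1 - Real.log p.2))
            + b • Real.log (1 + Real.exp (-Real.log q.1 - Real.log q.2)) :=
          convexOn_log_one_add_exp.2 (mem_univ _) (mem_univ _) ha hb hab
  have := hmain.smul (by positivity : (0:ℝ) ≤ (Real.log 2)⁻¹)
  simpa [div_eq_inv_mul, smul_eq_mul] using this
end

section
/- For all S, I, S̃, Ĩ > 0, the first-order Taylor bound log₂(1 + 1/(S I)) ≥ log₂(1 + 1/(S̃ Ĩ)) − (S − S̃)/(ln 2 · (S̃² Ĩ + S̃)) − (I − Ĩ)/(ln 2 · (Ĩ² S̃ + Ĩ)) holds. -/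
open Real Set

private lemma taylor_aux_deriv (c : ℝ) (hc : 0 < c) {x : ℝ} (hx : 0 < x) :
    HasDerivAt (fun s : ℝ => Real.log (s^2*c+1) - Real.log (c+1) - 2*Real.log s + (2*s-2)/(c+1))
      (2/(c+1) - 2/(x*(x^2*c+1))) x := by
  have hx1 : (0:ℝ) < x^2*c+1 := by positivity
  have h1 : HasDerivAt (fun s : ℝ => s^2*c+1) (2*x*c) x := by
    have := ((hasDerivAt_pow 2 x).mul_const c).add_const 1
    simpa using this
  have h2 : HasDerivAt (fun s : ℝ => Real.log (s^2*c+1)) (2*x*c/(x^2*c+1)) x :=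
    h1.log hx1.ne'
  have h3 : HasDerivAt (fun s : ℝ => 2*Real.log s) (2*(1/x)) x := by
    simpa using (Real.hasDerivAt_log hx.ne').const_mul 2
  have h4 : HasDerivAt (fun s : ℝ => (2*s-2)/(c+1)) (2/(c+1)) x := by
    have := (((hasDerivAt_id x).const_mul 2).sub_const 2).div_const (c+1)
    simpa using this
  have := ((h2.sub_const (Real.log (c+1))).sub h3).add h4
  refine this.congr_deriv ?_
  have hc1 : (0:ℝ) < c + 1 := by positivity
  field_simp
  ring

private lemma taylor_aux_F_nonneg (c : ℝ) (hc : 0 < c) {s : ℝ} (hs : 0 < s) :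
    0 ≤ Real.log (s^2*c+1) - Real.log (c+1) - 2*Real.log s + (2*s-2)/(c+1) := by
  set f : ℝ → ℝ := fun s => Real.log (s^2*c+1) - Real.log (c+1) - 2*Real.log s + (2*s-2)/(c+1)
    with hf
  have hf1 : f 1 = 0 := by simp [hf]
  have hderiv : ∀ x : ℝ, 0 < x → deriv f x = 2/(c+1) - 2/(x*(x^2*c+1)) :=
    fun x hx => (taylor_aux_deriv c hc hx).deriv
  have hcont : ∀ x : ℝ, 0 < x → ContinuousAt f x :=
    fun x hx => (taylor_aux_deriv c hc hx).continuousAt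
  rcases le_or_gt s 1 with h1 | h1
  · have hanti : AntitoneOn f (Ioc 0 1) := by
      apply antitoneOn_of_deriv_nonpos (convex_Ioc 0 1)
      · exact fun x hx => (hcont x hx.1).continuousWithinAt
      · intro x hx
        rw [interior_Ioc] at hx
        exact (taylor_aux_deriv c hc hx.1).differentiableAt.differentiableWithinAt
      · intro x hx
        rw [interior_Ioc] at hx
        rw [hderiv x hx.1]
        have hx3 : x^3 ≤ 1 := pow_le_one₀ hx.1.le hx.2.le
        have hle : x*(x^2*c+1) ≤ c+1 := by nlinarith [mul_le_mul_of_nonneg_right hx3 hc.le]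
        have hpos : 0 < x*(x^2*c+1) := mul_pos hx.1 (by positivity)
        have h2 : 2/(c+1) ≤ 2/(x*(x^2*c+1)) := by
          apply div_le_div_of_nonneg_left (by norm_num) hpos hle
        linarith
    have := hanti (mem_Ioc.mpr ⟨hs, h1⟩) (mem_Ioc.mpr ⟨zero_lt_one, le_refl 1⟩) h1
    rw [hf1] at this
    exact this
  · have hmono : MonotoneOn f (Ici 1) := by
      apply monotoneOn_of_deriv_nonneg (convex_Ici 1)
      · exact fun x hx => (hcont x (lt_of_lt_of_le zero_lt_one hx)).continuousWithinAt
      · intro x hx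
        rw [interior_Ici] at hx
        exact (taylor_aux_deriv c hc (lt_trans zero_lt_one hx)).differentiableAt.differentiableWithinAt
      · intro x hx
        rw [interior_Ici] at hx
        have hx0 : (0:ℝ) < x := lt_trans zero_lt_one hx
        rw [hderiv x hx0]
        have hx3 : (1:ℝ) ≤ x^3 := one_le_pow₀ hx.le
        have hle : c+1 ≤ x*(x^2*c+1) := by nlinarith [mul_le_mul_of_nonneg_right hx3 hc.le]
        have hpos : (0:ℝ) < c+1 := by positivity
        have h2 : 2/(x*(x^2*c+1)) ≤ 2/(c+1) := by
          apply div_le_div_of_nonneg_left (by norm_num) hpos hle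
        linarith
    have := hmono (mem_Ici.mpr (le_refl 1)) (mem_Ici.mpr h1.le) h1.le
    rw [hf1] at this
    exact this
private lemma taylor_aux_ln (S I St It : ℝ)
    (hS : 0 < S) (hI : 0 < I) (hSt : 0 < St) (hIt : 0 < It) :
    Real.log (S*I+1) - Real.log S - Real.log I ≥
      Real.log (St*It+1) - Real.log St - Real.log It
        - (S-St)/(St*(St*It+1)) - (I-It)/(It*(St*It+1)) := by
  set a := S / St with ha_def
  set b := I / It with hb_def
  set d := St * It with hd_def
  have ha : 0 < a := div_pos hS hSt
  have hb : 0 < b := div_pos hI hIt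
  have hd : 0 < d := mul_pos hSt hIt
  have hd1 : (0:ℝ) < d + 1 := by linarith
  set s := Real.sqrt (a*b) with hs_def
  have hs : 0 < s := Real.sqrt_pos.mpr (mul_pos ha hb)
  have hs2 : s^2 = a*b := Real.sq_sqrt (mul_pos ha hb).le
  have key := taylor_aux_F_nonneg d hd hs
  have hsc : s^2*d = S*I := by
    rw [hs2, ha_def, hb_def, hd_def]; field_simp
  rw [hsc] at key
  have hsum : 2*s ≤ a + b := by
    nlinarith [sq_nonneg (a-b), sq_nonneg (a+b-2*s), hs.le, ha, hb]
  have hlog : 2*Real.log s = Real.log S - Real.log St + (Real.log I - Real.log It) := by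
    have h1 : Real.log (s^2) = 2*Real.log s := by
      rw [Real.log_pow]; push_cast; ring
    rw [← h1, hs2, Real.log_mul ha.ne' hb.ne', ha_def, hb_def,
      Real.log_div hS.ne' hSt.ne', Real.log_div hI.ne' hIt.ne']
  have e1 : (S-St)/(St*(d+1)) = (a-1)/(d+1) := by
    rw [ha_def]; field_simp
  have e2 : (I-It)/(It*(d+1)) = (b-1)/(d+1) := by
    rw [hb_def]; field_simp
  have e3 : (2*s-2)/(d+1) ≤ (a-1)/(d+1) + (b-1)/(d+1) := by
    rw [← add_div]
    gcongr
    linarith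
  linarith [key, hlog, e1, e2, e3]

/-- First-order Taylor lower bound of the jointly convex function
`(S, I) ↦ log₂(1 + 1/(S I))` at the point `(S̃, Ĩ)`. -/
theorem log2_taylor_lower_bound (S I St It : ℝ)
    (hS : 0 < S) (hI : 0 < I) (hSt : 0 < St) (hIt : 0 < It) :
    Real.logb 2 (1 + 1 / (S * I)) ≥
      Real.logb 2 (1 + 1 / (St * It))
        - (S - St) / (Real.log 2 * (St ^ 2 * It + St))
        - (I - It) / (Real.log 2 * (It ^ 2 * St + It)) := by
  have h2 : (0:ℝ) < Real.log 2 := Real.log_pos one_lt_two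
  have hlogform : ∀ X Y : ℝ, 0 < X → 0 < Y →
      Real.log (1 + 1/(X*Y)) = Real.log (X*Y+1) - Real.log X - Real.log Y := by
    intro X Y hX hY
    have hXY : 0 < X*Y := mul_pos hX hY
    rw [show (1 + 1/(X*Y)) = (X*Y+1)/(X*Y) by field_simp,
      Real.log_div (by linarith) hXY.ne', Real.log_mul hX.ne' hY.ne']
    ring
  have hK : Real.log (1 + 1/(S*I)) ≥ Real.log (1 + 1/(St*It))
      - (S-St)/(St^2*It+St) - (I-It)/(It^2*St+It) := by
    rw [hlogform S I hS hI, hlogform St It hSt hIt,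
      show St^2*It+St = St*(St*It+1) by ring,
      show It^2*St+It = It*(St*It+1) by ring]
    exact taylor_aux_ln S I St It hS hI hSt hIt
  simp only [Real.logb]
  rw [ge_iff_le, show (S - St) / (Real.log 2 * (St ^ 2 * It + St))
      = ((S-St)/(St^2*It+St))/Real.log 2 by rw [div_mul_eq_div_div_swap],
    show (I - It) / (Real.log 2 * (It ^ 2 * St + It))
      = ((I-It)/(It^2*St+It))/Real.log 2 by rw [div_mul_eq_div_div_swap],
    ← sub_div, ← sub_div]
  exact div_le_div_of_nonneg_right (ge_iff_le.mp hK) h2.le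
end
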